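/- For linear regression, A(θ) = θ²/2, the Shakeout regularizer equals π(w) = (τ/(2(1−τ))) · ∑_{j=1}^p x_j² (w_j + c·sgn(w_j))², i.e., (τ/(2(1−τ))) ‖x ∘ (w + c·s)‖₂² where s_j = sgn(w_j). -/
import Mathlib

open Finset

/-- for linear regression, `A θ = θ²/2`, the Shakeout regularizer
equals `(τ/(2(1-τ))) * ∑ j, x j ^ 2 * (w j + c * sgn (w j)) ^ 2`, i.e.,
`(τ/(2(1-τ))) * ‖x ∘ (w + c·s)‖₂²`. -/
theorem shakeout_regularizer_linear_regression (p : ℕ) (w x : Fin p → ℝ)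
    (c τ : ℝ) (hc : 0 < c) (hτ : τ ∈ Set.Ioo (0:ℝ) 1)
    (A : ℝ → ℝ) (hA : ∀ t, A t = t ^ 2 / 2)
    (θ : ℝ) (hθ : θ = ∑ j, w j * x j)
    (q : Fin p → ℝ) (hq : ∀ j, q j = x j * (w j + c * Real.sign (w j))) :
    τ * ∑ j, A (θ - q j) + (1 - τ) * ∑ j, A (θ + τ / (1 - τ) * q j)
        - (p : ℝ) * A θ
      = τ / (2 * (1 - τ)) * ∑ j, x j ^ 2 * (w j + c * Real.sign (w j)) ^ 2 := by
  have h1 : (p : ℝ) * A θ = ∑ _j : Fin p, A θ := by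
    simp [mul_comm]
  rw [h1, Finset.mul_sum, Finset.mul_sum, Finset.mul_sum,
    ← Finset.sum_add_distrib, ← Finset.sum_sub_distrib]
  refine Finset.sum_congr rfl fun j _ => ?_
  have hτ1 : (1 - τ) ≠ 0 := by
    have := hτ.2; intro h; linarith [sub_eq_zero.mp h]
  simp only [hA, hq]
  field_simp
  ring
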